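/- Let Δ denote the set of lattice roots of Γ^{2,2} and let S ⊆ Δ be any subset such that for every root α ∈ Δ, either α ∈ S or -α ∈ S (a splitting of the roots into positive and negative ones). Then the set D = {γ ∈ ℝ⁴ : B(α,γ) ≥ 0 for all α ∈ S} has empty interior. In particular, any potential fundamental domain for the reflection group of Γ^{2,2} acting on ℝ⁴ has empty interior. -/

import Mathlib

/-- The bilinear form of `Γ^{2,2}` extended ℝ-bilinearly to `ℝ⁴`. -/
def GammaBR (x y : EuclideanSpace ℝ (Fin 4)) : ℝ :=
  -(x 0 * y 1 + x 1 * y 0) - (x 2 * y 3 + x 3 * y 2)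

/-- A lattice root of `Γ^{2,2}`: an element `(k,l,m,n)` with `kl + mn = -1`,
equivalently of norm `B(α,α) = 2`. -/
def IsLatticeRoot (α : Fin 4 → ℤ) : Prop :=
  α 0 * α 1 + α 2 * α 3 = -1

/-- If `s * |a + n * b| ≤ |x + n * y|` for all naturals `n`, with `s > 0`,
then `s * |b| ≤ |y|`. -/
private lemma lim_aux {s a b x y : ℝ} (hs : 0 < s)
    (h : ∀ n : ℕ, s * |a + (n : ℝ) * b| ≤ |x + (n : ℝ) * y|) : s * |b| ≤ |y| := by
  by_contra hlt
  push_neg at hlt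
  have hpos : 0 < s * |b| - |y| := by linarith
  obtain ⟨n, hn⟩ := exists_nat_gt ((|x| + s * |a|) / (s * |b| - |y|))
  rw [div_lt_iff₀ hpos] at hn
  have h1 := h n
  have h2 : (n : ℝ) * |b| - |a| ≤ |a + (n : ℝ) * b| := by
    have t1 : |(n : ℝ) * b| ≤ |a + (n : ℝ) * b| + |a| := by
      calc |(n : ℝ) * b| = |(a + (n : ℝ) * b) + (-a)| := by ring_nf
        _ ≤ |a + (n : ℝ) * b| + |(-a)| := abs_add_le _ _
        _ = |a + (n : ℝ) * b| + |a| := by rw [abs_neg]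
    have t2 : |(n : ℝ) * b| = (n : ℝ) * |b| := by
      rw [abs_mul, Nat.abs_cast]
    linarith
  have h3 : |x + (n : ℝ) * y| ≤ |x| + (n : ℝ) * |y| := by
    have := abs_add_le x ((n : ℝ) * y)
    have t2 : |(n : ℝ) * y| = (n : ℝ) * |y| := by rw [abs_mul, Nat.abs_cast]
    linarith
  have h4 : s * ((n : ℝ) * |b| - |a|) ≤ s * |a + (n : ℝ) * b| :=
    mul_le_mul_of_nonneg_left h2 hs.le
  nlinarith

/-- For any splitting of the lattice roots of `Γ^{2,2}` into positive and
negative ones (`S` contains `α` or `-α` for every root `α`), the candidate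
fundamental domain `D = {γ ∈ ℝ⁴ : B(α,γ) ≥ 0 for all α ∈ S}` has empty
interior. -/
theorem fundamental_domain_empty_interior (S : Set (Fin 4 → ℤ))
    (hS : ∀ α ∈ S, IsLatticeRoot α)
    (hsplit : ∀ α : Fin 4 → ℤ, IsLatticeRoot α → α ∈ S ∨ -α ∈ S) :
    interior {γ : EuclideanSpace ℝ (Fin 4) |
      ∀ α ∈ S, 0 ≤ GammaBR (WithLp.toLp 2 (fun i => (α i : ℝ))) γ} = ∅ := by
  rw [Set.eq_empty_iff_forall_notMem]
  intro c hc
  obtain ⟨ε, hε, hball⟩ := Metric.mem_nhds_iff.mp (mem_interior_iff_mem_nhds.mp hc)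
  -- Step 1: the sign of `B(α,·)` is constant on the ball, hence
  -- `|B(α,v)| ≤ |B(α,c)|` for all `v` of norm `< ε`.
  have key : ∀ α : Fin 4 → ℤ, IsLatticeRoot α → ∀ v : EuclideanSpace ℝ (Fin 4), ‖v‖ < ε →
      |GammaBR (WithLp.toLp 2 fun i => (α i : ℝ)) v| ≤ |GammaBR (WithLp.toLp 2 fun i => (α i : ℝ)) c| := by
    intro α hα v hv
    have hmem : ∀ w : EuclideanSpace ℝ (Fin 4), ‖w‖ < ε →
        ∀ β ∈ S, 0 ≤ GammaBR (WithLp.toLp 2 fun i => (β i : ℝ)) (c + w) := by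
      intro w hw
      have : c + w ∈ Metric.ball c ε := by
        rw [Metric.mem_ball, dist_eq_norm, add_sub_cancel_left]
        exact hw
      exact hball this
    have expand : ∀ w : EuclideanSpace ℝ (Fin 4),
        GammaBR (WithLp.toLp 2 fun i => (α i : ℝ)) (c + w)
          = GammaBR (WithLp.toLp 2 fun i => (α i : ℝ)) c + GammaBR (WithLp.toLp 2 fun i => (α i : ℝ)) w := by
      intro w; simp only [GammaBR, PiLp.add_apply, PiLp.toLp_apply]; ring
    have negv : GammaBR (WithLp.toLp 2 fun i => (α i : ℝ)) (-v) = - GammaBR (WithLp.toLp 2 fun i => (α i : ℝ)) v := by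
      simp only [GammaBR, PiLp.neg_apply, PiLp.toLp_apply]; ring
    have hnv : ‖(-v : EuclideanSpace ℝ (Fin 4))‖ < ε := by rwa [norm_neg]
    rcases hsplit α hα with hmemS | hmemS
    · have e1 := hmem v hv α hmemS
      have e2 := hmem (-v) hnv α hmemS
      rw [expand] at e1 e2
      rw [negv] at e2
      rw [abs_le]
      constructor <;>
        linarith [neg_abs_le (GammaBR (WithLp.toLp 2 fun i => (α i : ℝ)) c),
          le_abs_self (GammaBR (WithLp.toLp 2 fun i => (α i : ℝ)) c)]
    · have negfst : ∀ y : EuclideanSpace ℝ (Fin 4),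
          GammaBR (WithLp.toLp 2 fun i => ((-α) i : ℝ)) y = - GammaBR (WithLp.toLp 2 fun i => (α i : ℝ)) y := by
        intro y; simp only [GammaBR, Pi.neg_apply, Int.cast_neg, PiLp.toLp_apply]; ring
      have e1 := hmem v hv (-α) hmemS
      have e2 := hmem (-v) hnv (-α) hmemS
      rw [negfst] at e1 e2
      rw [expand] at e1 e2
      rw [negv] at e2
      rw [abs_le]
      constructor <;>
        linarith [neg_abs_le (GammaBR (WithLp.toLp 2 fun i => (α i : ℝ)) c),
          le_abs_self (GammaBR (WithLp.toLp 2 fun i => (α i : ℝ)) c)]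
  -- Step 2: coordinatewise bound `(ε/2)*|α i| ≤ |B(α,c)|`.
  have hnormsingle : ∀ (j : Fin 4), ‖EuclideanSpace.single j (ε/2)‖ < ε := by
    intro j
    rw [EuclideanSpace.norm_single, Real.norm_eq_abs, abs_of_pos (by linarith)]
    linarith
  have key2 : ∀ α : Fin 4 → ℤ, IsLatticeRoot α → ∀ i : Fin 4,
      ε/2 * |(α i : ℝ)| ≤ |GammaBR (WithLp.toLp 2 fun i => (α i : ℝ)) c| := by
    intro α hα i
    have habs : ∀ u : ℝ, |-(u * (ε/2))| = ε/2 * |u| := by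
      intro u
      rw [abs_neg, abs_mul, abs_of_pos (by linarith : (0:ℝ) < ε/2), mul_comm]
    fin_cases i
    · have h := key α hα (EuclideanSpace.single (1 : Fin 4) (ε/2)) (hnormsingle 1)
      have hval : GammaBR (WithLp.toLp 2 fun i => (α i : ℝ)) (EuclideanSpace.single (1 : Fin 4) (ε/2))
          = -((α 0 : ℝ) * (ε/2)) := by
        simp [GammaBR, EuclideanSpace.single_apply]
      rw [hval, habs] at h
      exact h
    · have h := key α hα (EuclideanSpace.single (0 : Fin 4) (ε/2)) (hnormsingle 0)
      have hval : GammaBR (WithLp.toLp 2 fun i => (α i : ℝ)) (EuclideanSpace.single (0 : Fin 4) (ε/2))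
          = -((α 1 : ℝ) * (ε/2)) := by
        simp [GammaBR, EuclideanSpace.single_apply]
      rw [hval, habs] at h
      exact h
    · have h := key α hα (EuclideanSpace.single (3 : Fin 4) (ε/2)) (hnormsingle 3)
      have hval : GammaBR (WithLp.toLp 2 fun i => (α i : ℝ)) (EuclideanSpace.single (3 : Fin 4) (ε/2))
          = -((α 2 : ℝ) * (ε/2)) := by
        simp [GammaBR, EuclideanSpace.single_apply]
      rw [hval, habs] at h
      exact h
    · have h := key α hα (EuclideanSpace.single (2 : Fin 4) (ε/2)) (hnormsingle 2)
      have hval : GammaBR (WithLp.toLp 2 fun i => (α i : ℝ)) (EuclideanSpace.single (2 : Fin 4) (ε/2))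
          = -((α 3 : ℝ) * (ε/2)) := by
        simp [GammaBR, EuclideanSpace.single_apply]
      rw [hval, habs] at h
      exact h
  -- Step 3: for coprime `(p,q)`, both `(ε/2)|p|` and `(ε/2)|q|` are at most
  -- `|p*(c 1 + c 3) + q*(c 0 - c 2)|`.
  set A : ℝ := c 1 + c 3 with hAdef
  set Bb : ℝ := c 0 - c 2 with hBdef
  have star : ∀ p q : ℤ, IsCoprime q p →
      ε/2 * |(p : ℝ)| ≤ |(p : ℝ) * A + (q : ℝ) * Bb| ∧
      ε/2 * |(q : ℝ)| ≤ |(p : ℝ) * A + (q : ℝ) * Bb| := by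
    intro p q hco
    obtain ⟨a, b, hab⟩ := hco
    set z : ℤ := a * (1 - p * q) with hz
    set w : ℤ := b * (1 - p * q) with hw
    have hzw : q * z + p * w = 1 - p * q := by
      rw [hz, hw]; linear_combination (1 - p * q) * hab
    set β : Fin 4 → ℤ := ![z + p, -q - w, z, w] with hβ
    set v : Fin 4 → ℤ := ![p, q, p, -q] with hv
    have hβ0 : β 0 = z + p := rfl
    have hβ1 : β 1 = -q - w := rfl
    have hβ2 : β 2 = z := rfl
    have hβ3 : β 3 = w := rfl
    have hv0 : v 0 = p := rfl
    have hv1 : v 1 = q := rfl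
    have hv2 : v 2 = p := rfl
    have hv3 : v 3 = -q := rfl
    have hroot : ∀ n : ℕ, IsLatticeRoot (fun i => β i + (n : ℤ) * v i) := by
      intro n
      show (β 0 + (n:ℤ) * v 0) * (β 1 + (n:ℤ) * v 1)
          + (β 2 + (n:ℤ) * v 2) * (β 3 + (n:ℤ) * v 3) = -1
      rw [hβ0, hβ1, hβ2, hβ3, hv0, hv1, hv2, hv3]
      linear_combination (-1 : ℤ) * hzw
    have hY : GammaBR (WithLp.toLp 2 fun i => (v i : ℝ)) c = -((p : ℝ) * A + (q : ℝ) * Bb) := by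
      show -((v 0 : ℝ) * c 1 + (v 1 : ℝ) * c 0) - ((v 2 : ℝ) * c 3 + (v 3 : ℝ) * c 2)
          = -((p : ℝ) * A + (q : ℝ) * Bb)
      rw [hv0, hv1, hv2, hv3, hAdef, hBdef]
      push_cast
      ring
    have hlin : ∀ n : ℕ, GammaBR (WithLp.toLp 2 fun i => ((β i + (n : ℤ) * v i : ℤ) : ℝ)) c
        = GammaBR (WithLp.toLp 2 fun i => (β i : ℝ)) c + (n : ℝ) * GammaBR (WithLp.toLp 2 fun i => (v i : ℝ)) c := by
      intro n
      simp only [GammaBR, PiLp.toLp_apply]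
      push_cast
      ring
    have habs : |GammaBR (WithLp.toLp 2 fun i => (v i : ℝ)) c| = |(p : ℝ) * A + (q : ℝ) * Bb| := by
      rw [hY, abs_neg]
    constructor
    · have h0 := lim_aux (s := ε/2) (a := (β 0 : ℝ)) (b := (v 0 : ℝ))
        (x := GammaBR (WithLp.toLp 2 fun i => (β i : ℝ)) c) (y := GammaBR (WithLp.toLp 2 fun i => (v i : ℝ)) c)
        (by linarith) ?_
      · rw [habs] at h0; rw [hv0] at h0; exact h0
      · intro n
        have h := key2 _ (hroot n) 0
        rw [hlin n] at h
        have : ((β 0 + (n : ℤ) * v 0 : ℤ) : ℝ) = (β 0 : ℝ) + (n : ℝ) * (v 0 : ℝ) := by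
          push_cast; ring
        rw [this] at h
        exact h
    · have h1 := lim_aux (s := ε/2) (a := (β 1 : ℝ)) (b := (v 1 : ℝ))
        (x := GammaBR (WithLp.toLp 2 fun i => (β i : ℝ)) c) (y := GammaBR (WithLp.toLp 2 fun i => (v i : ℝ)) c)
        (by linarith) ?_
      · rw [habs] at h1; rw [hv1] at h1; exact h1
      · intro n
        have h := key2 _ (hroot n) 1
        rw [hlin n] at h
        have : ((β 1 + (n : ℤ) * v 1 : ℤ) : ℝ) = (β 1 : ℝ) + (n : ℝ) * (v 1 : ℝ) := by
          push_cast; ring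
        rw [this] at h
        exact h
  -- Step 4: `|A|` and `|Bb|` are bounded below.
  have hA : ε/2 ≤ |A| := by
    have h := (star 1 0 (isCoprime_zero_left.mpr isUnit_one)).1
    simpa using h
  have hB : ε/2 ≤ |Bb| := by
    have h := (star 0 1 isCoprime_one_left).2
    simpa using h
  have hBne : Bb ≠ 0 := by
    intro h0
    rw [h0, abs_zero] at hB
    linarith
  -- Step 5: Dirichlet's approximation theorem gives a contradiction.
  obtain ⟨n, hn⟩ := exists_nat_gt (2 * |Bb| / ε)
  have hn_pos : 0 < n := by
    have h0 : (0 : ℝ) < 2 * |Bb| / ε := by positivity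
    exact_mod_cast h0.trans hn
  obtain ⟨j, k, hk0, hkn, hjk⟩ := Real.exists_int_int_abs_mul_sub_le (A / Bb) hn_pos
  -- |k*(A/Bb) - j| ≤ 1/(n+1), convert to |k*A - j*Bb| ≤ |Bb|/(n+1)
  have hconv : |(k : ℝ) * A - (j : ℝ) * Bb| ≤ |Bb| / (n + 1) := by
    have heq : (k : ℝ) * (A / Bb) - (j : ℝ) = ((k : ℝ) * A - (j : ℝ) * Bb) / Bb := by
      field_simp
    rw [heq, abs_div] at hjk
    have hBbpos : 0 < |Bb| := abs_pos.mpr hBne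
    rw [div_le_div_iff₀ hBbpos (by positivity)] at hjk
    rw [div_eq_mul_inv, ← div_eq_mul_inv]
    rw [le_div_iff₀ (by positivity)]
    linarith [hjk]
  -- reduce (j,k) by their gcd
  set g : ℕ := Int.gcd j k with hg
  have hgpos : 0 < g := Int.gcd_pos_of_ne_zero_right j (by exact_mod_cast hk0.ne')
  set j' : ℤ := j / (g : ℤ) with hj'
  set k' : ℤ := k / (g : ℤ) with hk'
  have hjg : (g : ℤ) * j' = j := Int.mul_ediv_cancel' (Int.gcd_dvd_left j k)
  have hkg : (g : ℤ) * k' = k := Int.mul_ediv_cancel' (Int.gcd_dvd_right j k)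
  have hco : IsCoprime (-j') k' := by
    apply IsCoprime.neg_left
    rw [Int.isCoprime_iff_gcd_eq_one]
    exact Int.gcd_div_gcd_div_gcd (by exact_mod_cast hgpos)
  have hk'pos : 0 < k' := by
    rcases lt_trichotomy k' 0 with h | h | h
    · exfalso
      have : k < 0 := by
        rw [← hkg]
        exact mul_neg_of_pos_of_neg (by exact_mod_cast hgpos) h
      omega
    · exfalso
      rw [← hkg, h, mul_zero] at hk0
      exact lt_irrefl 0 hk0
    · exact h
  have hstar := (star k' (-j') hco).1
  push_cast at hstar
  -- the small linear combination
  have hsmall : |(k' : ℝ) * A + (-j' : ℝ) * Bb| ≤ |Bb| / (n + 1) := by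
    have hgR : (1 : ℝ) ≤ (g : ℝ) := by exact_mod_cast hgpos
    have heq2 : (k : ℝ) * A - (j : ℝ) * Bb = (g : ℝ) * ((k' : ℝ) * A + (-j' : ℝ) * Bb) := by
      rw [← hjg, ← hkg]; push_cast; ring
    rw [heq2, abs_mul, abs_of_pos (by linarith : (0:ℝ) < (g:ℝ))] at hconv
    nlinarith [abs_nonneg ((k' : ℝ) * A + (-j' : ℝ) * Bb), div_nonneg (abs_nonneg Bb) (by positivity : (0:ℝ) ≤ (n:ℝ)+1)]
  have hk'R : (1 : ℝ) ≤ |(k' : ℝ)| := by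
    rw [abs_of_pos (by exact_mod_cast hk'pos : (0:ℝ) < (k':ℝ))]
    exact_mod_cast hk'pos
  -- final contradiction
  have hfin1 : ε/2 ≤ |(k' : ℝ) * A + (-j' : ℝ) * Bb| := by
    calc ε/2 = ε/2 * 1 := by ring
      _ ≤ ε/2 * |(k' : ℝ)| := by nlinarith
      _ ≤ _ := hstar
  have hfin2 : |Bb| / (n + 1) < ε/2 := by
    rw [div_lt_iff₀ (by positivity : (0:ℝ) < (n:ℝ)+1)]
    have : 2 * |Bb| < ε * n := by
      rw [div_lt_iff₀ hε] at hn
      linarith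
    nlinarith
  linarith
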